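/- Let γ, k > 0 and let w : [0,∞) → [0,∞) be a Lipschitz function with w(t)′ ≥ −k·w(t)^γ at each point of differentiability and w(0) > 0. If γ = 1 then w(t) ≥ w(0)·e^{−kt} for all t ≥ 0; if γ > 1 then w(t) ≥ (w(0)^{1−γ} + k(γ−1)t)^{−1/(γ−1)} for all t ≥ 0. -/

import Mathlib

open MeasureTheory Set Filter
open scoped ENNReal NNReal

/-- A Lipschitz function on `[a, b]` whose derivative is positive at every point of
differentiability of `(a, b)` satisfies `f a ≤ f b`. -/
lemma lipschitz_mono_of_deriv_pos {f : ℝ → ℝ} {K : ℝ≥0} {a b : ℝ}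
    (hf : LipschitzOnWith K f (Set.Icc a b)) (hab : a ≤ b)
    (hd : ∀ x ∈ Set.Ioo a b, DifferentiableAt ℝ f x → 0 < deriv f x) : f a ≤ f b := by
  by_contra hba
  push_neg at hba
  set N : Set ℝ := {x | x ∈ Set.Ioo a b ∧ ¬DifferentiableAt ℝ f x} with hNdef
  have hN : volume N = 0 := by
    have h1 := hf.ae_differentiableWithinAt_of_mem (μ := volume)
    refine measure_mono_null ?_ (MeasureTheory.ae_iff.1 h1)
    rintro x ⟨hxI, hxd⟩
    intro hx
    exact hxd ((hx (Set.Ioo_subset_Icc_self hxI)).differentiableAt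
      (Icc_mem_nhds hxI.1 hxI.2))
  have hcont : ContinuousOn f (Set.Icc a b) := hf.continuousOn
  have key : Set.Ioo (f b) (f a) ⊆ f '' N := by
    intro y hy
    obtain ⟨hy1, hy2⟩ := hy
    set S := Set.Icc a b ∩ f ⁻¹' {y} with hS
    have hSne : S.Nonempty := by
      obtain ⟨x, hx, hfx⟩ := intermediate_value_Icc' hab hcont ⟨hy1.le, hy2.le⟩
      exact ⟨x, hx, hfx⟩
    have hSclosed : IsClosed S := hcont.preimage_isClosed_of_isClosed isClosed_Icc isClosed_singleton
    have hSbdd : BddAbove S := ⟨b, fun x hx => hx.1.2⟩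
    set x0 := sSup S with hx0def
    have hx0 : x0 ∈ S := hSclosed.csSup_mem hSne hSbdd
    have hfx0 : f x0 = y := hx0.2
    have hx0a : a < x0 := by
      rcases eq_or_lt_of_le hx0.1.1 with h | h
      · exfalso; rw [← h] at hfx0; exact absurd hfx0 (by linarith)
      · exact h
    have hx0b : x0 < b := by
      rcases eq_or_lt_of_le hx0.1.2 with h | h
      · exfalso; rw [h] at hfx0; exact absurd hfx0 (by linarith)
      · exact h
    have hlt : ∀ x ∈ Set.Ioc x0 b, f x < y := by
      intro x hx
      by_contra hge
      push_neg at hge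
      rcases eq_or_lt_of_le hge with h | h
      · have : x ∈ S := ⟨⟨hx0a.le.trans hx.1.le, hx.2⟩, h.symm⟩
        exact absurd (le_csSup hSbdd this) (not_le.2 hx.1)
      · have hsub : Set.Icc (f b) (f x) ⊆ f '' Set.Icc x b :=
          intermediate_value_Icc' hx.2 (hcont.mono (Set.Icc_subset_Icc
            (hx0a.le.trans hx.1.le) le_rfl))
        obtain ⟨z, hz, hfz⟩ := hsub ⟨hy1.le, h.le⟩
        have : z ∈ S := ⟨⟨hx0a.le.trans (hx.1.le.trans hz.1), hz.2⟩, hfz⟩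
        exact absurd (le_csSup hSbdd this) (not_le.2 (lt_of_lt_of_le hx.1 hz.1))
    have hnd : ¬DifferentiableAt ℝ f x0 := by
      intro hdiff
      have hpos := hd x0 ⟨hx0a, hx0b⟩ hdiff
      have htend : Tendsto (slope f x0) (nhdsWithin x0 (Set.Ioi x0)) (nhds (deriv f x0)) :=
        (hasDerivAt_iff_tendsto_slope.1 hdiff.hasDerivAt).mono_left
          (nhdsWithin_mono x0 (fun z hz => ne_of_gt hz))
      have hle : deriv f x0 ≤ 0 := by
        refine le_of_tendsto htend ?_
        filter_upwards [Ioo_mem_nhdsGT_of_mem ⟨le_rfl, hx0b⟩] with x hx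
        have h1 : f x < y := hlt x ⟨hx.1, hx.2.le⟩
        have h2 : (0:ℝ) < x - x0 := sub_pos.2 hx.1
        rw [slope_def_field]
        rw [div_nonpos_iff]
        right
        constructor
        · rw [hfx0]; linarith
        · linarith
      linarith
    exact ⟨x0, ⟨⟨hx0a, hx0b⟩, hnd⟩, hfx0⟩
  have h2 : volume (f '' N) = 0 := by
    have hNsub : N ⊆ Set.Icc a b := fun x hx => Set.Ioo_subset_Icc_self hx.1
    have h3 := (hf.mono hNsub).hausdorffMeasure_image_le (zero_le_one)
    have h4 : volume (f '' N) ≤ (K : ℝ≥0∞) ^ (1:ℝ) * volume N := by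
      calc volume (f '' N) = μH[1] (f '' N) := by rw [MeasureTheory.hausdorffMeasure_real]
        _ ≤ (K : ℝ≥0∞) ^ (1:ℝ) * μH[1] N := h3
        _ = (K : ℝ≥0∞) ^ (1:ℝ) * volume N := by rw [MeasureTheory.hausdorffMeasure_real]
    rw [hN, mul_zero] at h4
    exact le_antisymm h4 zero_le
  have h5 : volume (Set.Ioo (f b) (f a)) = 0 :=
    le_antisymm (le_trans (measure_mono key) h2.le) zero_le
  rw [Real.volume_Ioo] at h5
  have : (0:ℝ≥0∞) < ENNReal.ofReal (f a - f b) := ENNReal.ofReal_pos.2 (by linarith)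
  simp [h5] at this

/-- Barrier comparison: a strict subsolution below `w` at time `0` stays below `w`. -/
lemma barrier_le (γ k : ℝ) (hγ : 0 ≤ γ) (hk : 0 < k) (w : ℝ → ℝ) (K : ℝ≥0)
    (hw : LipschitzOnWith K w (Set.Ici 0)) (hwpos : ∀ t ≥ (0 : ℝ), 0 ≤ w t)
    (hwsup : ∀ t ≥ (0 : ℝ), ∀ d : ℝ, HasDerivAt w d t → -k * w t ^ γ ≤ d)
    (B B' : ℝ → ℝ) (hBd : ∀ t ≥ (0:ℝ), HasDerivAt B (B' t) t)
    (hB'c : ContinuousOn B' (Set.Ici 0))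
    (hBsub : ∀ t ≥ (0:ℝ), B' t < -k * B t ^ γ)
    (hB0 : B 0 < w 0) :
    ∀ t ≥ (0:ℝ), B t ≤ w t := by
  intro t1 ht1
  by_contra hlt
  push_neg at hlt
  have hwc : ContinuousOn w (Set.Ici 0) := hw.continuousOn
  have hBc : ContinuousOn B (Set.Ici 0) := fun x hx =>
    (hBd x hx).continuousAt.continuousWithinAt
  set S := Set.Icc 0 t1 ∩ (fun t => w t - B t) ⁻¹' Set.Ici 0 with hSdef
  have hIccsub : Set.Icc (0:ℝ) t1 ⊆ Set.Ici 0 := fun x hx => hx.1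
  have h0S : (0:ℝ) ∈ S := ⟨⟨le_rfl, ht1⟩, by simp [Set.mem_Ici]; linarith⟩
  have hSclosed : IsClosed S :=
    ((hwc.sub hBc).mono hIccsub).preimage_isClosed_of_isClosed isClosed_Icc isClosed_Ici
  have hbdd : BddAbove S := ⟨t1, fun x hx => hx.1.2⟩
  set t0 := sSup S with ht0def
  have ht0S : t0 ∈ S := hSclosed.csSup_mem ⟨0, h0S⟩ hbdd
  have ht0nonneg : 0 ≤ t0 := ht0S.1.1
  have ht0w : B t0 ≤ w t0 := by
    have := ht0S.2; simp [Set.mem_Ici] at this; linarith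
  have ht1S : t1 ∉ S := by
    intro h
    have := h.2; simp [Set.mem_Ici] at this; linarith
  have ht01 : t0 < t1 := lt_of_le_of_ne ht0S.1.2 (fun h => ht1S (h ▸ ht0S))
  have hmid : ∀ x ∈ Set.Ioo t0 t1, w x < B x := by
    intro x hx
    by_contra hge
    push_neg at hge
    have : x ∈ S := ⟨⟨ht0nonneg.trans hx.1.le, hx.2.le⟩, by simp [Set.mem_Ici]; linarith⟩
    exact absurd (le_csSup hbdd this) (not_le.2 hx.1)
  have ht0eq : B t0 = w t0 := by
    rcases eq_or_lt_of_le ht0w with h | h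
    · exact h
    · exfalso
      have hcw : ContinuousWithinAt (fun t => w t - B t) (Set.Ici 0) t0 :=
        (hwc.sub hBc) t0 ht0nonneg
      have hcw' : Tendsto (fun t => w t - B t) (nhdsWithin t0 (Set.Ioi t0))
          (nhds (w t0 - B t0)) :=
        hcw.tendsto.mono_left (nhdsWithin_mono t0 (fun z hz => ht0nonneg.trans (le_of_lt hz)))
      have hev : ∀ᶠ x in nhdsWithin t0 (Set.Ioi t0), 0 < w x - B x :=
        hcw'.eventually (eventually_gt_nhds (by linarith))
      have hev2 : ∀ᶠ x in nhdsWithin t0 (Set.Ioi t0), x ∈ Set.Ioo t0 t1 :=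
        eventually_mem_set.2 (Ioo_mem_nhdsGT_of_mem ⟨le_rfl, ht01⟩)
      obtain ⟨x, hx1, hx2⟩ := (hev.and hev2).exists
      exact absurd (hmid x hx2) (not_lt.2 (by linarith))
  -- the function h = w - B is Lipschitz on [t0, t1]
  obtain ⟨M, hM⟩ := (isCompact_Icc (a := t0) (b := t1)).exists_bound_of_continuousOn
    (hB'c.mono (fun x hx => ht0nonneg.trans hx.1))
  have hBLip : LipschitzOnWith M.toNNReal B (Set.Icc t0 t1) := by
    apply (convex_Icc t0 t1).lipschitzOnWith_of_nnnorm_hasDerivWithin_le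
      (f' := B')
      (fun x hx => (hBd x (ht0nonneg.trans hx.1)).hasDerivWithinAt)
    intro x hx
    have h1 := hM x hx
    have : (‖B' x‖₊ : ℝ) ≤ (M.toNNReal : ℝ) := by
      simp [Real.coe_toNNReal']
      left; exact h1
    exact_mod_cast this
  have hLip : LipschitzOnWith (K + M.toNNReal) (fun x => w x - B x) (Set.Icc t0 t1) := by
    rw [lipschitzOnWith_iff_dist_le_mul]
    intro x hx y hy
    have hwLip := lipschitzOnWith_iff_dist_le_mul.1
      (hw.mono (fun z hz => ht0nonneg.trans hz.1)) x hx y hy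
    have hBLip' := lipschitzOnWith_iff_dist_le_mul.1 hBLip x hx y hy
    calc dist (w x - B x) (w y - B y) ≤ dist (w x) (w y) + dist (B x) (B y) :=
          dist_sub_sub_le _ _ _ _
      _ ≤ (K : ℝ) * dist x y + (M.toNNReal : ℝ) * dist x y := add_le_add hwLip hBLip'
      _ = ((K + M.toNNReal : ℝ≥0) : ℝ) * dist x y := by push_cast; ring
  have hkey : ∀ x ∈ Set.Ioo t0 t1, DifferentiableAt ℝ (fun x => w x - B x) x →
      0 < deriv (fun x => w x - B x) x := by
    intro x hx hdiff
    have hx0 : (0:ℝ) < x := lt_of_le_of_lt ht0nonneg hx.1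
    have hwderiv : HasDerivAt w (deriv (fun x => w x - B x) x + B' x) x := by
      have h1 : HasDerivAt (fun y => (w y - B y) + B y)
          (deriv (fun x => w x - B x) x + B' x) x :=
        hdiff.hasDerivAt.add (hBd x hx0.le)
      have h2 : (fun y => (w y - B y) + B y) = w := by funext y; ring
      rwa [h2] at h1
    have h1 := hwsup x hx0.le _ hwderiv
    have h2 : w x ^ γ ≤ B x ^ γ :=
      Real.rpow_le_rpow (hwpos x hx0.le) (hmid x hx).le hγ
    have h3 := hBsub x hx0.le
    nlinarith [hk]
  have hfinal := lipschitz_mono_of_deriv_pos hLip ht01.le hkey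
  rw [ht0eq] at hfinal
  simp at hfinal
  linarith

open scoped ENNReal NNReal
theorem stmt_6 (γ k : ℝ) (hγ : 1 ≤ γ) (hk : 0 < k) (w : ℝ → ℝ) (K : ℝ≥0)
    (hw : LipschitzOnWith K w (Set.Ici 0)) (hwpos : ∀ t ≥ (0 : ℝ), 0 ≤ w t)
    (hwsup : ∀ t ≥ (0 : ℝ), ∀ d : ℝ, HasDerivAt w d t → -k * w t ^ γ ≤ d)
    (h0 : 0 < w 0) :
    (γ = 1 → ∀ t ≥ (0 : ℝ), w 0 * Real.exp (-k * t) ≤ w t) ∧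
    (1 < γ → ∀ t ≥ (0 : ℝ),
      (w 0 ^ (1 - γ) + k * (γ - 1) * t) ^ (-(1 / (γ - 1))) ≤ w t) := by
  constructor
  · -- case γ = 1
    intro hγ1 t ht
    subst hγ1
    have key : ∀ ε ∈ Set.Ioo (0:ℝ) (w 0),
        (w 0 - ε) * Real.exp (-(k + ε) * t) ≤ w t := by
      intro ε hε
      refine barrier_le 1 k zero_le_one hk w K hw hwpos hwsup
        (fun s => (w 0 - ε) * Real.exp (-(k + ε) * s))
        (fun s => (w 0 - ε) * (Real.exp (-(k + ε) * s) * (-(k + ε))))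
        ?_ ?_ ?_ ?_ t ht
      · intro s hs
        have h1 : HasDerivAt (fun s : ℝ => -(k + ε) * s) (-(k + ε)) s := by
          simpa using (hasDerivAt_id s).const_mul (-(k + ε))
        exact (h1.exp).const_mul _
      · fun_prop
      · intro s hs
        show (w 0 - ε) * (Real.exp (-(k + ε) * s) * -(k + ε)) <
          -k * ((w 0 - ε) * Real.exp (-(k + ε) * s)) ^ (1:ℝ)
        rw [Real.rpow_one]
        have hE := Real.exp_pos (-(k + ε) * s)
        nlinarith [hε.1, hε.2, hE, mul_pos (mul_pos hε.1 (sub_pos.2 hε.2)) hE]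
      · show (w 0 - ε) * Real.exp (-(k + ε) * 0) < w 0
        rw [show -(k + ε) * (0:ℝ) = 0 by ring, Real.exp_zero, mul_one]
        linarith [hε.1]
    have htend : Tendsto (fun ε : ℝ => (w 0 - ε) * Real.exp (-(k + ε) * t))
        (nhdsWithin 0 (Set.Ioi 0)) (nhds (w 0 * Real.exp (-k * t))) := by
      have hc : ContinuousAt (fun ε : ℝ => (w 0 - ε) * Real.exp (-(k + ε) * t)) 0 := by
        fun_prop
      have h7 : Tendsto (fun ε : ℝ => (w 0 - ε) * Real.exp (-(k + ε) * t))
          (nhdsWithin 0 (Set.Ioi 0)) (nhds ((w 0 - 0) * Real.exp (-(k + 0) * t))) :=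
        hc.tendsto.mono_left nhdsWithin_le_nhds
      simpa using h7
    refine le_of_tendsto htend ?_
    filter_upwards [Ioo_mem_nhdsGT_of_mem ⟨le_rfl, h0⟩] with ε hε using key ε hε
  · -- case γ > 1
    intro hγ1 t ht
    set p := -(1 / (γ - 1)) with hp
    have hγ1' : (0:ℝ) < γ - 1 := by linarith
    have hpneg : p < 0 := by
      rw [hp]; exact neg_lt_zero.mpr (by positivity)
    set c0 := w 0 ^ (1 - γ) with hc0
    have hc0pos : 0 < c0 := Real.rpow_pos_of_pos h0 _
    have key : ∀ ε > (0:ℝ),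
        (c0 + ε + (k + ε) * (γ - 1) * t) ^ p ≤ w t := by
      intro ε hε
      have hbase : ∀ s ≥ (0:ℝ), 0 < c0 + ε + (k + ε) * (γ - 1) * s := by
        intro s hs
        have : 0 ≤ (k + ε) * (γ - 1) * s := by positivity
        linarith
      refine barrier_le γ k (by linarith) hk w K hw hwpos hwsup
        (fun s => (c0 + ε + (k + ε) * (γ - 1) * s) ^ p)
        (fun s => (k + ε) * (γ - 1) * p * (c0 + ε + (k + ε) * (γ - 1) * s) ^ (p - 1))
        ?_ ?_ ?_ ?_ t ht
      · intro s hs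
        have h1 : HasDerivAt (fun s : ℝ => c0 + ε + (k + ε) * (γ - 1) * s)
            ((k + ε) * (γ - 1)) s := by
          simpa using ((hasDerivAt_id s).const_mul ((k + ε) * (γ - 1))).const_add (c0 + ε)
        exact h1.rpow_const (Or.inl (hbase s hs).ne')
      · intro s hs
        refine ContinuousWithinAt.mul continuousWithinAt_const ?_
        exact (((continuous_const.add ((continuous_mul_left _))).continuousAt).rpow_const
          (Or.inl (hbase s hs).ne')).continuousWithinAt
      · intro s hs
        show (k + ε) * (γ - 1) * p * (c0 + ε + (k + ε) * (γ - 1) * s) ^ (p - 1) <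
          -k * ((c0 + ε + (k + ε) * (γ - 1) * s) ^ p) ^ γ
        have hne : γ - 1 ≠ 0 := hγ1'.ne'
        set X := c0 + ε + (k + ε) * (γ - 1) * s with hX
        have hXpos : 0 < X := hbase s hs
        have hpγ : p * γ = p - 1 := by rw [hp]; field_simp; ring
        have hpow : (X ^ p) ^ γ = X ^ (p - 1) := by
          rw [← Real.rpow_mul hXpos.le, hpγ]
        have hXp : 0 < X ^ (p - 1) := Real.rpow_pos_of_pos hXpos _
        have hgp : (γ - 1) * p = -1 := by
          rw [hp]; field_simp
        have h5 : (k + ε) * (γ - 1) * p * X ^ (p - 1) = -(k + ε) * X ^ (p - 1) := by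
          linear_combination X ^ (p - 1) * (k + ε) * hgp
        rw [hpow, h5]
        nlinarith [mul_pos hε hXp]
      · have h1 : c0 ^ p = w 0 := by
          rw [hc0, ← Real.rpow_mul h0.le]
          have hne : γ - 1 ≠ 0 := hγ1'.ne'
          have h6 : (1 - γ) * p = 1 := by rw [hp]; field_simp; ring
          rw [h6, Real.rpow_one]
        have h2 : (c0 + ε + (k + ε) * (γ - 1) * 0) ^ p < c0 ^ p := by
          apply Real.rpow_lt_rpow_of_neg hc0pos _ hpneg
          simp; linarith
        rw [h1] at h2
        exact h2
    have hbpos : 0 < c0 + k * (γ - 1) * t := by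
      have : 0 ≤ k * (γ - 1) * t := by positivity
      linarith
    have htend : Tendsto (fun ε : ℝ => (c0 + ε + (k + ε) * (γ - 1) * t) ^ p)
        (nhdsWithin 0 (Set.Ioi 0)) (nhds ((c0 + k * (γ - 1) * t) ^ p)) := by
      have hc : ContinuousAt (fun ε : ℝ => (c0 + ε + (k + ε) * (γ - 1) * t) ^ p) 0 := by
        apply ContinuousAt.rpow_const
        · fun_prop
        · left; simp; exact hbpos.ne'
      have h7 : Tendsto (fun ε : ℝ => (c0 + ε + (k + ε) * (γ - 1) * t) ^ p)
          (nhdsWithin 0 (Set.Ioi 0)) (nhds ((c0 + 0 + (k + 0) * (γ - 1) * t) ^ p)) :=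
        hc.tendsto.mono_left nhdsWithin_le_nhds
      have h8 : c0 + 0 + (k + 0) * (γ - 1) * t = c0 + k * (γ - 1) * t := by ring
      rwa [h8] at h7
    refine le_of_tendsto htend ?_
    filter_upwards [self_mem_nhdsWithin] with ε hε using key ε hε
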